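/- arXiv:0907.2503 — 2 statements merged into one kernel-verified Lean document; each statement's English description precedes it below -/
import Mathlib

section
/- Let (T,q) be a quadratic space over ℚ, E a totally real number field acting on T by q-self-adjoint endomorphisms, and Ẽ a normal closure of E/ℚ with Galois group G. The semilinear G-action on C(q) ⊗_ℚ Ẽ ≅ C(q_1) ⊗̂ ⋯ ⊗̂ C(q_d) (induced by the G-action on T ⊗ Ẽ permuting the orthogonal eigenspaces T_i) restricts, for each τ ∈ G and each i, to an isomorphism of ℤ/2-graded ℚ-algebras C(q_i) → C(q_{τ(i)}), and satisfies τ(C^{a}(q)) = C^{τa}(q), where C^{a}(q) = C^{a_1}(q_1) ⊗ ⋯ ⊗ C^{a_d}(q_d) for a ∈ {0,1}^d and (τa)_i = a_{τ^{-1}(i)}. -/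
open TensorProduct Module

variable (E F : Type) [Field E] [Field F] [Algebra ℚ E] [Algebra ℚ F]
variable (T : Type) [AddCommGroup T] [Module ℚ T] [Module E T] [IsScalarTower ℚ E T]
  [SMulCommClass ℚ E T]

/-- Scalar multiplication by `e ∈ E` on `T`, as a `ℚ`-linear endomorphism. -/
def smulE (e : E) : T →ₗ[ℚ] T where
  toFun t := e • t
  map_add' x y := smul_add e x y
  map_smul' q t := smul_comm e q t

/-- The `σ`-eigenspace `T_σ ⊆ T ⊗_ℚ F` of the (extended) `E`-action. -/
noncomputable def eigenspaceE (σ : E →ₐ[ℚ] F) : Submodule F (F ⊗[ℚ] T) :=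
  ⨅ e : E, Module.End.eigenspace (LinearMap.baseChange F (smulE E T e)) (σ e)

variable (q : QuadraticForm ℚ T)

/-- The semilinear Galois action of `τ ∈ Gal(F/ℚ)` on `C(q)_F = C(q ⊗ F)`, i.e. the
`τ`-semilinear extension of the identity of `C(q)`, transported through
`C(q.baseChange F) ≅ F ⊗ C(q)`. -/
noncomputable def galActClifford (τ : F ≃ₐ[ℚ] F) :
    CliffordAlgebra (q.baseChange F) →ₗ[ℚ] CliffordAlgebra (q.baseChange F) :=
  (((CliffordAlgebra.equivBaseChange F q).symm.toLinearMap).restrictScalars ℚ) ∘ₗ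
    (LinearMap.rTensor (CliffordAlgebra q) (τ.toLinearMap : F →ₗ[ℚ] F)) ∘ₗ
      (((CliffordAlgebra.equivBaseChange F q).toLinearMap).restrictScalars ℚ)

/-- The parity-`a` part `C^a(q_σ)` of the Clifford algebra `C(q_σ)` of the eigenspace
`T_σ`, viewed as a subspace of `C(q)_F`: the span of products of `n` vectors of `T_σ`
with `n ≡ a (mod 2)`. -/
noncomputable def cliffordEigenPiece (σ : E →ₐ[ℚ] F) (a : ZMod 2) :
    Submodule F (CliffordAlgebra (q.baseChange F)) :=
  ⨆ j : {n : ℕ // (n : ZMod 2) = a},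
    ((eigenspaceE E F T σ).map (CliffordAlgebra.ι (q.baseChange F))) ^ (j : ℕ)

/-- The subspace `C^{𝐚}(q) = C^{a₁}(q₁) ⊗ ⋯ ⊗ C^{a_d}(q_d)` of `C(q)_F`, for a parity
tuple `𝐚` indexed by the embeddings `σ : E ↪ F` (enumerated by `b`). -/
noncomputable def cliffordTuplePiece (dd : ℕ) (b : Fin dd ≃ (E →ₐ[ℚ] F))
    (a : (E →ₐ[ℚ] F) → ZMod 2) : Submodule F (CliffordAlgebra (q.baseChange F)) :=
  (List.ofFn (fun k : Fin dd => cliffordEigenPiece E F T q (b k) (a (b k)))).prod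

section Aux
variable {E F : Type} [Field E] [Field F] [Algebra ℚ E] [Algebra ℚ F]
variable {T : Type} [AddCommGroup T] [Module ℚ T] [Module E T] [IsScalarTower ℚ E T]
  [SMulCommClass ℚ E T]
variable {q : QuadraticForm ℚ T}

lemma rTensor_smul' {M : Type} [AddCommGroup M] [Module ℚ M] (τ : F ≃ₐ[ℚ] F) (c : F)
    (x : F ⊗[ℚ] M) :
    LinearMap.rTensor M (τ.toLinearMap : F →ₗ[ℚ] F) (c • x)
      = τ c • LinearMap.rTensor M (τ.toLinearMap : F →ₗ[ℚ] F) x := by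
  induction x using TensorProduct.induction_on with
  | zero => simp
  | tmul a m => simp [TensorProduct.smul_tmul', smul_eq_mul, map_mul]
  | add x y hx hy => simp [smul_add, hx, hy]

/-- `galT` : rTensor as a semilinear map. -/
noncomputable def galT (τ : F ≃ₐ[ℚ] F) :
    (F ⊗[ℚ] T) →ₛₗ[(τ.toRingEquiv : F →+* F)] F ⊗[ℚ] T where
  toFun := LinearMap.rTensor T (τ.toLinearMap : F →ₗ[ℚ] F)
  map_add' x y := map_add _ x y
  map_smul' c x := rTensor_smul' τ c x

lemma galT_galT (τ : F ≃ₐ[ℚ] F) (x : F ⊗[ℚ] T) :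
    galT (T := T) τ (galT τ.symm x) = x := by
  show LinearMap.rTensor T _ (LinearMap.rTensor T _ x) = x
  induction x using TensorProduct.induction_on with
  | zero => simp
  | tmul a m => simp
  | add x y hx hy => simp [hx, hy]

/-- The Galois action as a `ℚ`-algebra homomorphism. -/
noncomputable def galAlg (q : QuadraticForm ℚ T) (τ : F ≃ₐ[ℚ] F) :
    CliffordAlgebra (q.baseChange F) →ₐ[ℚ] CliffordAlgebra (q.baseChange F) :=
  (((CliffordAlgebra.equivBaseChange F q).symm.toAlgHom.restrictScalars ℚ)).comp
    ((Algebra.TensorProduct.map τ.toAlgHom (AlgHom.id ℚ (CliffordAlgebra q))).comp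
      ((CliffordAlgebra.equivBaseChange F q).toAlgHom.restrictScalars ℚ))

lemma rTensor_eq_tensorMap (τ : F ≃ₐ[ℚ] F) (y : F ⊗[ℚ] CliffordAlgebra q) :
    LinearMap.rTensor (CliffordAlgebra q) (τ.toLinearMap : F →ₗ[ℚ] F) y
      = Algebra.TensorProduct.map τ.toAlgHom (AlgHom.id ℚ (CliffordAlgebra q)) y := by
  induction y using TensorProduct.induction_on with
  | zero => simp
  | tmul a m => simp [Algebra.TensorProduct.map_tmul]
  | add x y hx hy => simp [hx, hy]

lemma galAct_eq_galAlg (τ : F ≃ₐ[ℚ] F) (x : CliffordAlgebra (q.baseChange F)) :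
    galActClifford F T q τ x = galAlg q τ x := by
  simp only [galActClifford, galAlg, LinearMap.coe_comp, Function.comp_apply,
    LinearMap.coe_restrictScalars, AlgEquiv.toLinearMap_apply, AlgHom.coe_comp,
    AlgHom.coe_restrictScalars', AlgEquiv.coe_algHom]
  rw [rTensor_eq_tensorMap]

lemma galAct_mul (τ : F ≃ₐ[ℚ] F) (x y : CliffordAlgebra (q.baseChange F)) :
    galActClifford F T q τ (x * y) = galActClifford F T q τ x * galActClifford F T q τ y := by
  simp [galAct_eq_galAlg, map_mul]

lemma galAct_one (τ : F ≃ₐ[ℚ] F) :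
    galActClifford F T q τ (1 : CliffordAlgebra (q.baseChange F)) = 1 := by
  simp [galAct_eq_galAlg, map_one]

lemma galAct_smul (τ : F ≃ₐ[ℚ] F) (c : F) (x : CliffordAlgebra (q.baseChange F)) :
    galActClifford F T q τ (c • x) = τ c • galActClifford F T q τ x := by
  simp only [galActClifford, LinearMap.coe_comp, Function.comp_apply,
    LinearMap.coe_restrictScalars, AlgEquiv.toLinearMap_apply]
  rw [map_smul, rTensor_smul', map_smul]

lemma galAct_ι (τ : F ≃ₐ[ℚ] F) (x : F ⊗[ℚ] T) :
    galActClifford F T q τ (CliffordAlgebra.ι (q.baseChange F) x)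
      = CliffordAlgebra.ι (q.baseChange F) (galT τ x) := by
  show galActClifford F T q τ (CliffordAlgebra.ι (q.baseChange F) x)
      = CliffordAlgebra.ι (q.baseChange F)
          (LinearMap.rTensor T (τ.toLinearMap : F →ₗ[ℚ] F) x)
  induction x using TensorProduct.induction_on with
  | zero => simp
  | tmul a m =>
      simp only [galActClifford, LinearMap.coe_comp, Function.comp_apply,
        LinearMap.coe_restrictScalars, AlgEquiv.toLinearMap_apply,
        CliffordAlgebra.equivBaseChange_apply, CliffordAlgebra.toBaseChange_ι,
        LinearMap.rTensor_tmul,        CliffordAlgebra.equivBaseChange_symm_apply, CliffordAlgebra.ofBaseChange_tmul_ι]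
  | add x y hx hy => simp_all [map_add]

/-- The Galois action as a semilinear map. -/
noncomputable def galC (q : QuadraticForm ℚ T) (τ : F ≃ₐ[ℚ] F) :
    CliffordAlgebra (q.baseChange F) →ₛₗ[(τ.toRingEquiv : F →+* F)]
      CliffordAlgebra (q.baseChange F) where
  toFun := galActClifford F T q τ
  map_add' x y := map_add _ x y
  map_smul' c x := galAct_smul τ c x

lemma galC_galC (τ : F ≃ₐ[ℚ] F) (x : CliffordAlgebra (q.baseChange F)) :
    galC q τ (galC q τ.symm x) = x := by
  show galActClifford F T q τ (galActClifford F T q τ.symm x) = x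
  simp only [galActClifford, LinearMap.coe_comp, Function.comp_apply,
    LinearMap.coe_restrictScalars, AlgEquiv.toLinearMap_apply]
  rw [AlgEquiv.apply_symm_apply]
  have : ∀ y : F ⊗[ℚ] CliffordAlgebra q,
      LinearMap.rTensor (CliffordAlgebra q) (τ.toLinearMap : F →ₗ[ℚ] F)
        (LinearMap.rTensor (CliffordAlgebra q) (τ.symm.toLinearMap : F →ₗ[ℚ] F) y) = y := by
    intro y
    induction y using TensorProduct.induction_on with
    | zero => simp
    | tmul a m => simp
    | add x y hx hy => simp [hx, hy]
  rw [this, AlgEquiv.symm_apply_apply]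

set_option linter.unusedSectionVars false

lemma mem_eigenspaceE {σ : E →ₐ[ℚ] F} {x : F ⊗[ℚ] T} :
    x ∈ eigenspaceE E F T σ ↔
      ∀ e : E, LinearMap.baseChange F (smulE E T e) x = σ e • x := by
  simp [eigenspaceE, Submodule.mem_iInf, Module.End.mem_eigenspace_iff]

lemma baseChange_galT_comm (τ : F ≃ₐ[ℚ] F) (e : E) (x : F ⊗[ℚ] T) :
    LinearMap.baseChange F (smulE E T e) (galT τ x)
      = galT τ (LinearMap.baseChange F (smulE E T e) x) := by
  show LinearMap.baseChange F (smulE E T e)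
      (LinearMap.rTensor T (τ.toLinearMap : F →ₗ[ℚ] F) x)
    = LinearMap.rTensor T (τ.toLinearMap : F →ₗ[ℚ] F)
      (LinearMap.baseChange F (smulE E T e) x)
  induction x using TensorProduct.induction_on with
  | zero => simp
  | tmul a m => simp [LinearMap.baseChange_tmul]
  | add x y hx hy => simp [hx, hy]

lemma galT_mem_eigenspaceE {τ : F ≃ₐ[ℚ] F} {σ : E →ₐ[ℚ] F} {x : F ⊗[ℚ] T}
    (hx : x ∈ eigenspaceE E F T σ) :
    galT τ x ∈ eigenspaceE E F T (τ.toAlgHom.comp σ) := by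
  rw [mem_eigenspaceE] at hx ⊢
  intro e
  rw [baseChange_galT_comm, hx e, map_smulₛₗ]
  rfl

lemma map_galT_eigenspaceE (τ : F ≃ₐ[ℚ] F) (σ : E →ₐ[ℚ] F) :
    Submodule.map (galT τ) (eigenspaceE E F T σ)
      = eigenspaceE E F T (τ.toAlgHom.comp σ) := by
  apply le_antisymm
  · rintro _ ⟨y, hy, rfl⟩
    exact galT_mem_eigenspaceE hy
  · intro x hx
    refine ⟨galT τ.symm x, ?_, galT_galT τ x⟩
    have h := galT_mem_eigenspaceE (τ := τ.symm) hx
    have hσ : (τ.symm.toAlgHom).comp (τ.toAlgHom.comp σ) = σ := by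
      ext e; simp
    rwa [hσ] at h

lemma map_galAct_restrict (τ : F ≃ₐ[ℚ] F) (p : Submodule F (CliffordAlgebra (q.baseChange F))) :
    Submodule.map (galActClifford F T q τ) (p.restrictScalars ℚ)
      = (Submodule.map (galC q τ) p).restrictScalars ℚ := by
  ext x
  simp only [Submodule.mem_map, Submodule.restrictScalars_mem, Submodule.mem_map]
  rfl

lemma map_galC_mul (τ : F ≃ₐ[ℚ] F) (p p' : Submodule F (CliffordAlgebra (q.baseChange F))) :
    Submodule.map (galC q τ) (p * p')
      = Submodule.map (galC q τ) p * Submodule.map (galC q τ) p' := by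
  apply le_antisymm
  · rw [Submodule.map_le_iff_le_comap]
    apply Submodule.mul_le.2
    intro m hm n hn
    rw [Submodule.mem_comap]
    have : galC q τ (m * n) = galC q τ m * galC q τ n := galAct_mul τ m n
    rw [this]
    exact Submodule.mul_mem_mul (Submodule.mem_map_of_mem hm) (Submodule.mem_map_of_mem hn)
  · apply Submodule.mul_le.2
    rintro _ ⟨m, hm, rfl⟩ _ ⟨n, hn, rfl⟩
    have h : galC q τ (m * n) = galC q τ m * galC q τ n := galAct_mul τ m n
    rw [← h]
    exact Submodule.mem_map_of_mem (Submodule.mul_mem_mul hm hn)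

lemma map_galC_one (τ : F ≃ₐ[ℚ] F) :
    Submodule.map (galC q τ) (1 : Submodule F (CliffordAlgebra (q.baseChange F))) = 1 := by
  rw [Submodule.one_eq_span, Submodule.map_span]
  congr 1
  ext x
  constructor
  · rintro ⟨y, hy, rfl⟩
    simp only [Set.mem_singleton_iff] at hy
    subst hy
    exact galAct_one (T := T) (q := q) τ
  · rintro rfl
    exact ⟨1, rfl, galAct_one τ⟩

lemma map_galC_pow (τ : F ≃ₐ[ℚ] F) (p : Submodule F (CliffordAlgebra (q.baseChange F)))
    (n : ℕ) :
    Submodule.map (galC q τ) (p ^ n) = (Submodule.map (galC q τ) p) ^ n := by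
  induction n with
  | zero => simpa [pow_zero] using map_galC_one τ
  | succ n ih => rw [pow_succ, pow_succ, map_galC_mul, ih]

lemma map_galC_iota (τ : F ≃ₐ[ℚ] F) (p : Submodule F (F ⊗[ℚ] T)) :
    Submodule.map (galC q τ) (Submodule.map (CliffordAlgebra.ι (q.baseChange F)) p)
      = Submodule.map (CliffordAlgebra.ι (q.baseChange F)) (Submodule.map (galT τ) p) := by
  ext x
  simp only [Submodule.mem_map]
  constructor
  · rintro ⟨_, ⟨v, hv, rfl⟩, rfl⟩
    exact ⟨galT τ v, ⟨v, hv, rfl⟩, (galAct_ι τ v).symm⟩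
  · rintro ⟨_, ⟨v, hv, rfl⟩, rfl⟩
    exact ⟨CliffordAlgebra.ι (q.baseChange F) v, ⟨v, hv, rfl⟩, galAct_ι τ v⟩

lemma map_galC_piece (τ : F ≃ₐ[ℚ] F) (σ : E →ₐ[ℚ] F) (a : ZMod 2) :
    Submodule.map (galC q τ) (cliffordEigenPiece E F T q σ a)
      = cliffordEigenPiece E F T q (τ.toAlgHom.comp σ) a := by
  unfold cliffordEigenPiece
  rw [Submodule.map_iSup]
  refine iSup_congr fun j => ?_
  rw [map_galC_pow, map_galC_iota, map_galT_eigenspaceE]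

variable (E q) in
def IsAdj : Prop := ∀ (e : E) (x y : T),
      QuadraticMap.polarBilin q (e • x) y = QuadraticMap.polarBilin q x (e • y)

lemma baseChange_adj (hadj : IsAdj E q) (e : E) (x y : F ⊗[ℚ] T) :
    LinearMap.BilinForm.baseChange F (QuadraticMap.polarBilin q) (LinearMap.baseChange F (smulE E T e) x) y
      = LinearMap.BilinForm.baseChange F (QuadraticMap.polarBilin q) x (LinearMap.baseChange F (smulE E T e) y) := by
  induction x using TensorProduct.induction_on with
  | zero => simp
  | add x₁ x₂ h₁ h₂ => simp [map_add, LinearMap.add_apply, h₁, h₂]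
  | tmul a m =>
    induction y using TensorProduct.induction_on with
    | zero => simp
    | add y₁ y₂ h₁ h₂ =>
      simp only [map_add]
      rw [h₁, h₂]
    | tmul a' m' =>
      simp only [LinearMap.baseChange_tmul, LinearMap.BilinForm.baseChange_tmul]
      have : smulE E T e m = e • m := rfl
      rw [this, show smulE E T e m' = e • m' from rfl, hadj e m m']

lemma polar_eigen_ortho (hadj : IsAdj E q) {σ σ' : E →ₐ[ℚ] F} (h : σ ≠ σ') {x y : F ⊗[ℚ] T}
    (hx : x ∈ eigenspaceE E F T σ) (hy : y ∈ eigenspaceE E F T σ') :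
    QuadraticMap.polar (q.baseChange F) x y = 0 := by
  haveI : CharZero F := charZero_of_injective_algebraMap (algebraMap ℚ F).injective
  haveI : Invertible (2 : F) := invertibleOfNonzero two_ne_zero
  obtain ⟨e, he⟩ : ∃ e : E, σ e ≠ σ' e := by
    by_contra hc
    push_neg at hc
    exact h (AlgHom.ext hc)
  rw [mem_eigenspaceE] at hx hy
  set B := LinearMap.BilinForm.baseChange F (QuadraticMap.polarBilin q) with hB
  have h1 : B (LinearMap.baseChange F (smulE E T e) x) y
      = B x (LinearMap.baseChange F (smulE E T e) y) := baseChange_adj hadj e x y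
  rw [hx e, hy e, LinearMap.map_smul₂, map_smul] at h1
  have h2 : (σ e - σ' e) • B x y = 0 := by
    rw [sub_smul, h1, sub_self]
  have h3 : B x y = 0 := by
    have := smul_eq_zero.mp h2
    rcases this with h | h
    · exact absurd (sub_eq_zero.mp h) he
    · exact h
  have h4 : QuadraticMap.polarBilin (q.baseChange F) x y = 0 := by
    rw [QuadraticForm.polarBilin_baseChange, ← hB, h3]
  simpa [QuadraticMap.polarBilin_apply_apply] using h4

lemma iota_anticomm (hadj : IsAdj E q) {σ σ' : E →ₐ[ℚ] F} (h : σ ≠ σ') {x y : F ⊗[ℚ] T}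
    (hx : x ∈ eigenspaceE E F T σ) (hy : y ∈ eigenspaceE E F T σ') :
    CliffordAlgebra.ι (q.baseChange F) x * CliffordAlgebra.ι (q.baseChange F) y
      = -(CliffordAlgebra.ι (q.baseChange F) y * CliffordAlgebra.ι (q.baseChange F) x) := by
  have hs := CliffordAlgebra.ι_mul_ι_add_swap (Q := q.baseChange F) x y
  rw [polar_eigen_ortho hadj h hx hy, map_zero] at hs
  exact eq_neg_of_add_eq_zero_left hs

lemma iotaSub_comm (hadj : IsAdj E q) {σ σ' : E →ₐ[ℚ] F} (h : σ ≠ σ') :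
    Commute ((eigenspaceE E F T σ).map (CliffordAlgebra.ι (q.baseChange F)))
      ((eigenspaceE E F T σ').map (CliffordAlgebra.ι (q.baseChange F))) := by
  have key : ∀ σ σ' : E →ₐ[ℚ] F, σ ≠ σ' →
      (eigenspaceE E F T σ).map (CliffordAlgebra.ι (q.baseChange F)) *
        (eigenspaceE E F T σ').map (CliffordAlgebra.ι (q.baseChange F)) ≤
      (eigenspaceE E F T σ').map (CliffordAlgebra.ι (q.baseChange F)) *
        (eigenspaceE E F T σ).map (CliffordAlgebra.ι (q.baseChange F)) := by
    intro σ σ' h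
    apply Submodule.mul_le.2
    rintro _ ⟨v, hv, rfl⟩ _ ⟨w, hw, rfl⟩
    rw [iota_anticomm hadj h hv hw]
    exact neg_mem (Submodule.mul_mem_mul (Submodule.mem_map_of_mem hw)
      (Submodule.mem_map_of_mem hv))
  exact le_antisymm (key σ σ' h) (key σ' σ h.symm)

lemma piece_comm (hadj : IsAdj E q) {σ σ' : E →ₐ[ℚ] F} (h : σ ≠ σ') (a a' : ZMod 2) :
    Commute (cliffordEigenPiece E F T q σ a) (cliffordEigenPiece E F T q σ' a') := by
  unfold cliffordEigenPiece
  show _ = _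
  simp_rw [Submodule.iSup_mul, Submodule.mul_iSup]
  rw [iSup_comm]
  exact iSup_congr fun j' => iSup_congr fun j =>
    ((iotaSub_comm hadj h).pow_pow _ _).eq

lemma map_galC_listProd (τ : F ≃ₐ[ℚ] F)
    (l : List (Submodule F (CliffordAlgebra (q.baseChange F)))) :
    Submodule.map (galC q τ) l.prod = (l.map (Submodule.map (galC q τ))).prod := by
  induction l with
  | nil => simpa using map_galC_one τ
  | cons hd tl ih => rw [List.prod_cons, List.map_cons, List.prod_cons, map_galC_mul, ih]

lemma ofFn_comp_perm {α : Type*} {n : ℕ} (g : Fin n → α) (π : Fin n ≃ Fin n) :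
    (List.ofFn (g ∘ π)).Perm (List.ofFn g) := by
  rw [List.ofFn_eq_map, List.ofFn_eq_map]
  have h1 : (List.finRange n).map (g ∘ π) = ((List.finRange n).map (π : Fin n → Fin n)).map g := by
    rw [List.map_map]
  rw [h1]
  refine List.Perm.map g ?_
  refine List.perm_of_nodup_nodup_toFinset_eq
    ((List.nodup_finRange n).map π.injective) (List.nodup_finRange n) ?_
  ext x
  simp only [List.mem_toFinset, List.mem_map, List.mem_finRange, true_and]
  exact ⟨fun _ => trivial, fun _ => ⟨π.symm x, π.apply_symm_apply x⟩⟩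

lemma comp_symm_comp (τ : F ≃ₐ[ℚ] F) (s : E →ₐ[ℚ] F) :
    τ.symm.toAlgHom.comp (τ.toAlgHom.comp s) = s := by
  ext e; simp

/-- Post-composition with `τ` as an equivalence of embeddings. -/
def compEquivA (τ : F ≃ₐ[ℚ] F) : (E →ₐ[ℚ] F) ≃ (E →ₐ[ℚ] F) where
  toFun s := τ.toAlgHom.comp s
  invFun s := τ.symm.toAlgHom.comp s
  left_inv s := comp_symm_comp τ s
  right_inv s := by ext e; simp

@[simp] lemma compEquivA_apply (τ : F ≃ₐ[ℚ] F) (s : E →ₐ[ℚ] F) :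
    compEquivA τ s = τ.toAlgHom.comp s := rfl

lemma map_galC_tuple (hadj : IsAdj E q) (dd : ℕ) (b : Fin dd ≃ (E →ₐ[ℚ] F))
    (τ : F ≃ₐ[ℚ] F) (a : (E →ₐ[ℚ] F) → ZMod 2) :
    Submodule.map (galC q τ) (cliffordTuplePiece E F T q dd b a)
      = cliffordTuplePiece E F T q dd b (fun σ => a (τ.symm.toAlgHom.comp σ)) := by
  unfold cliffordTuplePiece
  rw [map_galC_listProd, List.map_ofFn]
  set g : Fin dd → Submodule F (CliffordAlgebra (q.baseChange F)) :=
    fun k => cliffordEigenPiece E F T q (b k) (a (τ.symm.toAlgHom.comp (b k))) with hg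
  set π : Fin dd ≃ Fin dd := (b.trans (compEquivA τ)).trans b.symm with hπ
  have hfun : (Submodule.map (galC q τ)) ∘
      (fun k => cliffordEigenPiece E F T q (b k) (a (b k))) = g ∘ π := by
    funext k
    simp only [Function.comp_apply]
    rw [map_galC_piece]
    have hbπ : b (π k) = τ.toAlgHom.comp (b k) := by
      simp [hπ, Equiv.trans_apply, Equiv.apply_symm_apply]
    rw [hg]
    simp only [hbπ, comp_symm_comp]
  rw [hfun]
  refine List.Perm.prod_eq' (ofFn_comp_perm g π) ?_
  rw [List.pairwise_ofFn]
  intro i j hij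
  have hne : b ((π : Fin dd → Fin dd) i) ≠ b ((π : Fin dd → Fin dd) j) :=
    fun hc => hij.ne (π.injective (b.injective hc))
  exact piece_comm hadj hne _ _

end Aux

/-- Let `(T,q)` be a quadratic space over `ℚ` with self-adjoint
multiplication by a totally real number field `E`, `F` a normal closure of `E/ℚ` with
Galois group `G`, and `C(q)_F ≅ C(q₁) ⊗̂ ⋯ ⊗̂ C(q_d)` the Clifford algebra of the base
change, decomposed along the orthogonal eigenspaces `T_σ`.  Then the semilinear
`G`-action restricts, for each `τ ∈ G` and each embedding `σ`, to an isomorphism of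
`ℤ/2`-graded `ℚ`-algebras `C(q_σ) → C(q_{τσ})`, and satisfies `τ(C^𝐚(q)) = C^{τ𝐚}(q)`
where `(τ𝐚)_σ = 𝐚_{τ⁻¹σ}`. -/
theorem galois_action_on_clifford_pieces
    [FiniteDimensional ℚ E] [FiniteDimensional ℚ F] [Normal ℚ F]
    [FiniteDimensional E T]
    (dd : ℕ) (b : Fin dd ≃ (E →ₐ[ℚ] F)) (hdd : dd = finrank ℚ E)
    (hadj : ∀ (e : E) (x y : T),
      QuadraticMap.polarBilin q (e • x) y = QuadraticMap.polarBilin q x (e • y)) :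
    (∀ (τ : F ≃ₐ[ℚ] F) (σ : E →ₐ[ℚ] F) (a : ZMod 2),
      Submodule.map (galActClifford F T q τ)
          ((cliffordEigenPiece E F T q σ a).restrictScalars ℚ)
        = (cliffordEigenPiece E F T q (τ.toAlgHom.comp σ) a).restrictScalars ℚ) ∧
    (∀ (τ : F ≃ₐ[ℚ] F) (a : (E →ₐ[ℚ] F) → ZMod 2),
      Submodule.map (galActClifford F T q τ)
          ((cliffordTuplePiece E F T q dd b a).restrictScalars ℚ)
        = (cliffordTuplePiece E F T q dd b
            (fun σ => a (τ.symm.toAlgHom.comp σ))).restrictScalars ℚ) := by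

  constructor
  · intro τ σ a
    rw [map_galAct_restrict, map_galC_piece]
  · intro τ a
    rw [map_galAct_restrict, map_galC_tuple hadj]
end

section
/- Let d > 0 be a rational number expressible as d = c² + e² with c, e ∈ ℚ, e ≠ 0, and let E = ℚ(√d). Then the quaternion algebras (−d, √d(d − √d c))_E and (−1, √d − c)_E over E are isomorphic. -/
open Quaternion

/-- A quaternionic basis exhibiting `ℍ[F, -(s²), s(s² - sC)]` inside `ℍ[F, -1, s - C]`. -/
@[simps i j k]
def quatBasis1 {F : Type} [Field F] (s C Ee : F) (hsum : s ^ 2 = C ^ 2 + Ee ^ 2) :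
    QuaternionAlgebra.Basis ℍ[F, -1, s - C] (-(s ^ 2)) 0 (s * (s ^ 2 - s * C)) where
  i := ⟨0, s, 0, 0⟩
  j := ⟨0, 0, C, Ee⟩
  k := ⟨0, 0, -(s * Ee), s * C⟩
  i_mul_i := by ext <;> simp <;> ring
  j_mul_j := by
    ext <;> simp
    all_goals try ring
    linear_combination (C - s) * hsum
  i_mul_j := by ext <;> simp <;> ring
  j_mul_i := by ext <;> simp <;> ring

/-- A quaternionic basis exhibiting `ℍ[F, -1, s - C]` inside `ℍ[F, -(s²), s(s² - sC)]`. -/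
@[simps i j k]
def quatBasis2 {F : Type} [Field F] (s C Ee : F) (hs : s ≠ 0)
    (hsum : s ^ 2 = C ^ 2 + Ee ^ 2) :
    QuaternionAlgebra.Basis ℍ[F, -(s ^ 2), s * (s ^ 2 - s * C)] (-1) 0 (s - C) where
  i := ⟨0, s⁻¹, 0, 0⟩
  j := ⟨0, 0, C / s ^ 2, -(Ee / s ^ 3)⟩
  k := ⟨0, 0, Ee / s ^ 2, C / s ^ 3⟩
  i_mul_i := by
    ext <;> simp
    field_simp
  j_mul_j := by
    ext <;> simp
    all_goals try ring
    field_simp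
    linear_combination (C - s) * hsum
  i_mul_j := by
    ext <;> simp
    all_goals (field_simp <;> first | ring1 | exact Or.inl (by ring1))
  j_mul_i := by
    ext <;> simp
    all_goals (field_simp <;> first | ring1 | exact Or.inl (by ring1))

theorem aux_quat_iso {F : Type} [Field F] (s C Ee : F) (hs : s ≠ 0)
    (hsum : s ^ 2 = C ^ 2 + Ee ^ 2) :
    Nonempty (ℍ[F, -(s ^ 2), s * (s ^ 2 - s * C)] ≃ₐ[F] ℍ[F, -1, s - C]) := by
  refine ⟨AlgEquiv.ofAlgHom (quatBasis1 s C Ee hsum).liftHom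
    (quatBasis2 s C Ee hs hsum).liftHom ?_ ?_⟩
  · ext <;>
      simp [QuaternionAlgebra.Basis.lift, QuaternionAlgebra.Basis.self]
    all_goals field_simp
    all_goals first | ring1 | linear_combination s ^ 3 * hsum | linear_combination (-(s ^ 3)) * hsum | linear_combination -hsum | linear_combination hsum
  · ext <;>
      simp [QuaternionAlgebra.Basis.lift, QuaternionAlgebra.Basis.self]
    all_goals field_simp
    all_goals first | ring1 | linear_combination s ^ 3 * hsum | linear_combination (-(s ^ 3)) * hsum | linear_combination -hsum | linear_combination hsum

/-- Let `d > 0` be a rational number with `d = c² + e²`, `c, e ∈ ℚ`,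
`e ≠ 0`, and let `E = ℚ(√d)`.  Then the quaternion algebras
`(−d, √d(d − √d c))_E` and `(−1, √d − c)_E` over `E` are isomorphic. -/
theorem quaternion_algebras_isomorphic
    (d c e : ℚ) (hd0 : 0 < d) (hd : d = c ^ 2 + e ^ 2) (he : e ≠ 0)
    (E : Type) [Field E] [Algebra ℚ E] [FiniteDimensional ℚ E]
    (hE : Module.finrank ℚ E = 2)
    (sd : E) (hsd : sd ^ 2 = algebraMap ℚ E d) (hgen : Algebra.adjoin ℚ {sd} = ⊤) :
    Nonempty
      ((ℍ[E, -(algebraMap ℚ E d), sd * (algebraMap ℚ E d - sd * algebraMap ℚ E c)])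
        ≃ₐ[E] ℍ[E, -1, sd - algebraMap ℚ E c]) := by
  have hs : sd ≠ 0 := by
    intro h
    have h2 : (algebraMap ℚ E) d = 0 := by rw [← hsd, h]; ring
    exact hd0.ne' ((map_eq_zero _).mp h2)
  have hsum : sd ^ 2 = (algebraMap ℚ E c) ^ 2 + (algebraMap ℚ E e) ^ 2 := by
    rw [hsd, hd, map_add, map_pow, map_pow]
  rw [← hsd]
  exact aux_quat_iso sd (algebraMap ℚ E c) (algebraMap ℚ E e) hs hsum
end
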